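/- For natural numbers k and N, ∏_{j=1}^{N} (Γ(j) Γ(2k+j)) / Γ(j+k)² is asymptotic, as N → ∞, to g_k · N^{k²}/Γ(k²+1), where g_k = (k²)! ∏_{j=0}^{k-1} j!/(k+j)!. -/

import Mathlib

open Filter

private lemma fact_add_nat (n m : ℕ) :
    ((n + m).factorial : ℝ) = (n.factorial : ℝ) * ∏ i ∈ Finset.range m, ((n + i + 1 : ℕ) : ℝ) := by
  induction m with
  | zero => simp
  | succ m ih =>
      rw [Finset.prod_range_succ, show n + (m + 1) = (n + m) + 1 by ring, Nat.factorial_succ]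
      push_cast [ih]
      ring

private lemma key_prod (k : ℕ) : ∀ N : ℕ,
    (∏ j ∈ Finset.Icc 1 N,
        Real.Gamma j * Real.Gamma (2 * k + j) / Real.Gamma (j + k) ^ 2) =
      (∏ i ∈ Finset.range k, (i.factorial : ℝ) / ((k + i).factorial : ℝ)) *
        ∏ i ∈ Finset.range k, (((N + k + i).factorial : ℝ) / ((N + i).factorial : ℝ)) := by
  intro N
  induction N with
  | zero =>
      simp only [Finset.Icc_self, Nat.zero_add, zero_add]
      rw [Finset.Icc_eq_empty (by norm_num), Finset.prod_empty, ← Finset.prod_mul_distrib]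
      rw [Finset.prod_congr rfl (fun i _ => ?_), Finset.prod_const_one]
      rw [div_mul_div_comm, div_eq_one_iff_eq (by positivity)]
      ring
  | succ N ih =>
      rw [Finset.prod_Icc_succ_top (by omega), ih]
      have hG1 : Real.Gamma ((N + 1 : ℕ) : ℝ) = (N.factorial : ℝ) := by
        push_cast; exact Real.Gamma_nat_eq_factorial N
      have hG2 : Real.Gamma (2 * (k : ℝ) + ((N + 1 : ℕ) : ℝ)) = ((2 * k + N).factorial : ℝ) := by
        rw [show 2 * (k : ℝ) + ((N + 1 : ℕ) : ℝ) = ((2 * k + N : ℕ) : ℝ) + 1 by push_cast; ring]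
        exact Real.Gamma_nat_eq_factorial _
      have hG3 : Real.Gamma (((N + 1 : ℕ) : ℝ) + (k : ℝ)) = ((N + k).factorial : ℝ) := by
        rw [show ((N + 1 : ℕ) : ℝ) + (k : ℝ) = ((N + k : ℕ) : ℝ) + 1 by push_cast; ring]
        exact Real.Gamma_nat_eq_factorial _
      rw [hG1, hG2, hG3]
      rw [mul_assoc]
      congr 1
      -- now pure factorial identity
      have e1 : (∏ i ∈ Finset.range k, (((N + 1 + k + i).factorial : ℝ) / ((N + 1 + i).factorial : ℝ)))
          = (∏ i ∈ Finset.range k, (((N + k + i).factorial : ℝ) / ((N + i).factorial : ℝ)))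
            * ((∏ i ∈ Finset.range k, ((N + k + i + 1 : ℕ) : ℝ))
              / (∏ i ∈ Finset.range k, ((N + i + 1 : ℕ) : ℝ))) := by
        rw [Finset.prod_div_distrib, Finset.prod_div_distrib]
        have hn : (∏ i ∈ Finset.range k, (((N + 1 + k + i).factorial : ℝ)))
            = (∏ i ∈ Finset.range k, ((N + k + i).factorial : ℝ))
              * ∏ i ∈ Finset.range k, ((N + k + i + 1 : ℕ) : ℝ) := by
          rw [← Finset.prod_mul_distrib]
          refine Finset.prod_congr rfl fun i _ => ?_
          rw [show N + 1 + k + i = (N + k + i) + 1 by ring, Nat.factorial_succ]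
          push_cast; ring
        have hd : (∏ i ∈ Finset.range k, (((N + 1 + i).factorial : ℝ)))
            = (∏ i ∈ Finset.range k, ((N + i).factorial : ℝ))
              * ∏ i ∈ Finset.range k, ((N + i + 1 : ℕ) : ℝ) := by
          rw [← Finset.prod_mul_distrib]
          refine Finset.prod_congr rfl fun i _ => ?_
          rw [show N + 1 + i = (N + i) + 1 by ring, Nat.factorial_succ]
          push_cast; ring
        rw [hn, hd, div_mul_div_comm]
      rw [e1]
      congr 1
      -- N ! * (2k+N)! / ((N+k)!)^2 = P1 / P2
      have hNk : ((N + k).factorial : ℝ) = (N.factorial : ℝ) * ∏ i ∈ Finset.range k, ((N + i + 1 : ℕ) : ℝ) :=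
        fact_add_nat N k
      have h2k : ((2 * k + N).factorial : ℝ)
          = ((N + k).factorial : ℝ) * ∏ i ∈ Finset.range k, ((N + k + i + 1 : ℕ) : ℝ) := by
        rw [show 2 * k + N = (N + k) + k by ring, fact_add_nat (N + k) k]
      have hP2 : (∏ i ∈ Finset.range k, ((N + i + 1 : ℕ) : ℝ)) ≠ 0 := by positivity
      have hNf : (N.factorial : ℝ) ≠ 0 := by positivity
      rw [h2k, hNk]
      field_simp

/-- As `N → ∞`, `∏_{j=1}^{N} Γ(j) Γ(2k+j) / Γ(j+k)² ∼ g_k N^{k²} / Γ(k²+1)`,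
where `g_k = (k²)! ∏_{j=0}^{k-1} j!/(k+j)!`. -/
theorem stmt_8 (k : ℕ) :
    Tendsto (fun N : ℕ =>
      (∏ j ∈ Finset.Icc 1 N,
          Real.Gamma j * Real.Gamma (2 * k + j) / Real.Gamma (j + k) ^ 2) /
        ((((k ^ 2).factorial : ℝ) *
            ∏ j ∈ Finset.range k, (j.factorial : ℝ) / ((k + j).factorial : ℝ)) *
          (N : ℝ) ^ (k ^ 2) / Real.Gamma (k ^ 2 + 1)))
      atTop (nhds 1) := by
  have hGam : Real.Gamma ((k : ℝ) ^ 2 + 1) = ((k ^ 2).factorial : ℝ) := by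
    rw [show (k : ℝ) ^ 2 + 1 = ((k ^ 2 : ℕ) : ℝ) + 1 by push_cast; ring]
    exact Real.Gamma_nat_eq_factorial _
  have hC : (∏ i ∈ Finset.range k, (i.factorial : ℝ) / ((k + i).factorial : ℝ)) ≠ 0 := by
    apply Finset.prod_ne_zero_iff.mpr
    intro i _
    positivity
  have hK : ((k ^ 2).factorial : ℝ) ≠ 0 := by positivity
  have main : Tendsto (fun N : ℕ =>
      ∏ i ∈ Finset.range k, ∏ m ∈ Finset.range k, (((N + i + m + 1 : ℕ) : ℝ) / (N : ℝ)))
      atTop (nhds 1) := by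
    have : (1 : ℝ) = ∏ i ∈ Finset.range k, ∏ m ∈ Finset.range k, (1 : ℝ) := by simp
    rw [this]
    refine tendsto_finset_prod _ fun i _ => tendsto_finset_prod _ fun m _ => ?_
    have h1 : Tendsto (fun N : ℕ => 1 + ((i + m + 1 : ℕ) : ℝ) * (1 / (N : ℝ))) atTop (nhds 1) := by
      have := tendsto_one_div_atTop_nhds_zero_nat.const_mul (((i + m + 1 : ℕ) : ℝ))
      have := (tendsto_const_nhds (x := (1 : ℝ)) (f := atTop)).add this
      simpa using this
    refine h1.congr' ?_
    filter_upwards [eventually_ge_atTop 1] with N hN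
    have hN0 : (N : ℝ) ≠ 0 := by positivity
    field_simp
    push_cast; ring
  refine main.congr' ?_
  filter_upwards [eventually_ge_atTop 1] with N hN
  have hN0 : (N : ℝ) ≠ 0 := by
    simp only [ne_eq, Nat.cast_eq_zero]; omega
  rw [key_prod k N, hGam]
  have hQ : (∏ i ∈ Finset.range k, (((N + k + i).factorial : ℝ) / ((N + i).factorial : ℝ)))
      = ∏ i ∈ Finset.range k, ∏ m ∈ Finset.range k, ((N + i + m + 1 : ℕ) : ℝ) := by
    refine Finset.prod_congr rfl fun i _ => ?_
    have := fact_add_nat (N + i) k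
    rw [show N + k + i = (N + i) + k by ring, this]
    have : ((N + i).factorial : ℝ) ≠ 0 := by positivity
    field_simp
  rw [hQ]
  have hPow : ((N : ℝ)) ^ (k ^ 2) = ∏ i ∈ Finset.range k, ∏ m ∈ Finset.range k, (N : ℝ) := by
    simp [Finset.prod_const, ← pow_mul, sq]
  have hL : (∏ i ∈ Finset.range k, ∏ m ∈ Finset.range k, (((N + i + m + 1 : ℕ) : ℝ) / (N : ℝ)))
      = (∏ i ∈ Finset.range k, ∏ m ∈ Finset.range k, ((N + i + m + 1 : ℕ) : ℝ)) / (N : ℝ) ^ (k ^ 2) := by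
    rw [hPow, ← Finset.prod_div_distrib]
    exact Finset.prod_congr rfl fun i _ => Finset.prod_div_distrib ..
  rw [hL]
  have hPne : (∏ i ∈ Finset.range k, ∏ m ∈ Finset.range k, ((N + i + m + 1 : ℕ) : ℝ)) ≠ 0 := by
    positivity
  field_simp
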